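/- Let f : ℝ → ℝ be strictly increasing on [0,1]. Then every f-optimal distribution p_f is weakly decreasing along the sample order: for all indices i < j, p_f(i) ≥ p_f(j). -/

import Mathlib

/-- The data distribution on ℕ: strictly decreasing, positive, and summing to 1. -/
def IsDataDist (p : ℕ → ℝ) : Prop :=
  (∀ i j : ℕ, i < j → p i > p j) ∧ (∀ i, p i > 0) ∧ (∑' i, p i = 1)

/-- A distribution on ℕ: nonnegative and summing to 1. -/
def IsDist (q : ℕ → ℝ) : Prop :=
  (∀ i, 0 ≤ q i) ∧ (∑' i, q i = 1)

/-- The loss of distribution `q` under criterion `f`, w.r.t. data distribution `pdata`. -/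
noncomputable def lossF (pdata : ℕ → ℝ) (f : ℝ → ℝ) (q : ℕ → ℝ) : ℝ :=
  -∑' i, pdata i * f (q i)

/-- `p` is `f`-optimal: it is a distribution minimizing the loss over all distributions. -/
def IsOptimal (pdata : ℕ → ℝ) (f : ℝ → ℝ) (p : ℕ → ℝ) : Prop :=
  IsDist p ∧ ∀ q : ℕ → ℝ, IsDist q → lossF pdata f p ≤ lossF pdata f q

/-- Paper's Theorem 1: for strictly increasing `f` on `[0,1]`, any `f`-optimal
distribution is weakly decreasing along the sample order. -/
theorem optimal_monotone
    (pdata : ℕ → ℝ) (hdata : IsDataDist pdata)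
    (f : ℝ → ℝ) (hf : StrictMonoOn f (Set.Icc (0 : ℝ) 1))
    (p : ℕ → ℝ) (hp : IsOptimal pdata f p) :
    ∀ i j : ℕ, i < j → p i ≥ p j := by
  intro i j hij
  by_contra hcon
  push_neg at hcon
  obtain ⟨⟨hpnn, hpsum⟩, hopt⟩ := hp
  obtain ⟨hdec, hpos, hdsum⟩ := hdata
  -- summability of p and pdata
  have hSp : Summable p := by
    by_contra h
    rw [tsum_eq_zero_of_not_summable h] at hpsum; norm_num at hpsum
  have hSd : Summable pdata := by
    by_contra h
    rw [tsum_eq_zero_of_not_summable h] at hdsum; norm_num at hdsum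
  -- p k ∈ [0,1]
  have hmem : ∀ k, p k ∈ Set.Icc (0 : ℝ) 1 := by
    intro k
    refine ⟨hpnn k, ?_⟩
    calc p k ≤ ∑' n, p n := Summable.le_tsum hSp k (fun n _ => hpnn n)
    _ = 1 := hpsum
  -- the swapped distribution
  set q : ℕ → ℝ := fun k => p (Equiv.swap i j k) with hq
  have hqmem : ∀ k, q k ∈ Set.Icc (0 : ℝ) 1 := fun k => hmem _
  have hqdist : IsDist q := by
    constructor
    · intro k; exact (hqmem k).1
    · rw [hq]
      rw [(Equiv.swap i j).tsum_eq p]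
      exact hpsum
  -- bound on |f|
  set C : ℝ := max |f 0| |f 1| with hC
  have hfb : ∀ x ∈ Set.Icc (0 : ℝ) 1, |f x| ≤ C := by
    intro x hx
    rw [abs_le]
    constructor
    · calc -C ≤ -|f 0| := by simp [hC]
      _ ≤ f 0 := neg_abs_le _
      _ ≤ f x := hf.monotoneOn (Set.left_mem_Icc.2 one_pos.le) hx hx.1
    · calc f x ≤ f 1 := hf.monotoneOn hx (Set.right_mem_Icc.2 one_pos.le) hx.2
      _ ≤ |f 1| := le_abs_self _
      _ ≤ C := le_max_right _ _
  have hdnn : ∀ k, 0 ≤ pdata k := fun k => (hpos k).le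
  have hsummand : ∀ (r : ℕ → ℝ), (∀ k, r k ∈ Set.Icc (0:ℝ) 1) →
      Summable (fun k => pdata k * f (r k)) := by
    intro r hr
    apply Summable.of_norm_bounded (hSd.mul_right C)
    intro k
    rw [norm_mul, Real.norm_eq_abs, Real.norm_eq_abs, abs_of_nonneg (hdnn k)]
    exact mul_le_mul_of_nonneg_left (hfb _ (hr k)) (hdnn k)
  have hSfp := hsummand p hmem
  have hSfq := hsummand q hqmem
  -- the difference of the sums
  have hdiff : (∑' k, pdata k * f (q k)) - (∑' k, pdata k * f (p k))
      = (pdata i - pdata j) * (f (p j) - f (p i)) := by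
    rw [← Summable.tsum_sub hSfq hSfp]
    have hzero : ∀ k ∉ ({i, j} : Finset ℕ),
        pdata k * f (q k) - pdata k * f (p k) = 0 := by
      intro k hk
      simp only [Finset.mem_insert, Finset.mem_singleton, not_or] at hk
      have : q k = p k := by
        rw [hq]; simp [Equiv.swap_apply_of_ne_of_ne hk.1 hk.2]
      rw [this]; ring
    rw [tsum_eq_sum hzero]
    have hne : i ≠ j := hij.ne
    rw [Finset.sum_pair hne]
    have hqi : q i = p j := by rw [hq]; simp
    have hqj : q j = p i := by rw [hq]; simp
    rw [hqi, hqj]; ring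
  have hpos' : 0 < (pdata i - pdata j) * (f (p j) - f (p i)) := by
    apply mul_pos
    · linarith [hdec i j hij]
    · linarith [hf (hmem i) (hmem j) hcon]
  have := hopt q hqdist
  rw [lossF, lossF] at this
  linarith
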